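/- Let f : I → ℝ with I ⊆ (0,∞) an interval be harmonically s-convex for some s ∈ (0,1], and let a,b ∈ I with a < b. If f is integrable on [a,b], then (ab/(b-a)) ∫_a^b f(x)/x² dx ≤ (f(a)+f(b))/(s+1). -/

import Mathlib

open MeasureTheory Set

theorem hermite_hadamard_right_harmonically_s_convex
    (I : Set ℝ) (hI : I ⊆ Set.Ioi (0:ℝ)) (hconv : Convex ℝ I)
    (f : ℝ → ℝ) (s : ℝ) (hs : s ∈ Set.Ioc (0:ℝ) 1)
    (hhsc : ∀ x ∈ I, ∀ y ∈ I, ∀ t ∈ Set.Icc (0:ℝ) 1,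
      f (x * y / (t * x + (1 - t) * y)) ≤ t ^ s * f y + (1 - t) ^ s * f x)
    (a b : ℝ) (ha : a ∈ I) (hb : b ∈ I) (hab : a < b)
    (hint : IntervalIntegrable f MeasureTheory.volume a b) :
    (a * b / (b - a)) * ∫ x in a..b, f x / x ^ 2 ≤ (f a + f b) / (s + 1) := by
  have ha0 : (0:ℝ) < a := hI ha
  have hb0 : (0:ℝ) < b := hI hb
  have hba : (0:ℝ) < b - a := sub_pos.2 hab
  have hab0 : (0:ℝ) < a * b := mul_pos ha0 hb0
  set φ : ℝ → ℝ := fun t => a * b / (t * a + (1 - t) * b) with hφ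
  set φ' : ℝ → ℝ := fun t => a * b * (b - a) / (t * a + (1 - t) * b) ^ 2 with hφ'
  have hD : ∀ t ∈ Set.Ioo (0:ℝ) 1, 0 < t * a + (1 - t) * b := by
    rintro t ⟨ht0, ht1⟩
    have h1t : 0 < 1 - t := by linarith
    positivity
  -- derivative
  have hderiv : ∀ t ∈ Set.Ioo (0:ℝ) 1,
      HasDerivWithinAt φ (φ' t) (Set.Ioo 0 1) t := by
    intro t ht
    have hDt := hD t ht
    have h1 : HasDerivAt (fun t : ℝ => t * a + (1 - t) * b) (a - b) t := by
      have h := ((hasDerivAt_id t).mul_const a).add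
        (((hasDerivAt_const t (1:ℝ)).sub (hasDerivAt_id t)).mul_const b)
      exact h.congr_deriv (show _ = a - b by ring)
    have h2 : HasDerivAt φ ((0 * (t * a + (1 - t) * b) - a * b * (a - b)) /
        (t * a + (1 - t) * b) ^ 2) t :=
      (hasDerivAt_const t (a * b)).div h1 hDt.ne'
    have h3 : (0 * (t * a + (1 - t) * b) - a * b * (a - b)) / (t * a + (1 - t) * b) ^ 2
        = φ' t := by rw [hφ']; ring
    exact (h3 ▸ h2).hasDerivWithinAt
  have hinj : Set.InjOn φ (Set.Ioo 0 1) := by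
    intro t1 h1 t2 h2 heq
    have hD1 := hD t1 h1
    have hD2 := hD t2 h2
    rw [hφ] at heq
    have heq2 : a * b * (t2 * a + (1 - t2) * b) = a * b * (t1 * a + (1 - t1) * b) :=
      (div_eq_div_iff hD1.ne' hD2.ne').1 heq
    have hDD : t2 * a + (1 - t2) * b = t1 * a + (1 - t1) * b :=
      mul_left_cancel₀ hab0.ne' heq2
    have : t1 * (a - b) = t2 * (a - b) := by linarith
    exact mul_right_cancel₀ (sub_ne_zero.2 hab.ne) this
  have himg : φ '' Set.Ioo 0 1 = Set.Ioo a b := by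
    ext x
    constructor
    · rintro ⟨t, ht, rfl⟩
      have hDt := hD t ht
      obtain ⟨ht0, ht1⟩ := ht
      constructor
      · rw [hφ]
        simp only
        rw [lt_div_iff₀ hDt]
        nlinarith [mul_pos (mul_pos ht0 ha0) hba]
      · rw [hφ]
        simp only
        rw [div_lt_iff₀ hDt]
        nlinarith [mul_pos (mul_pos (show (0:ℝ) < 1 - t by linarith) hb0) hba]
    · rintro ⟨hax, hxb⟩
      have hx0 : 0 < x := lt_trans ha0 hax
      have hxa : 0 < x - a := sub_pos.2 hax
      refine ⟨b * (x - a) / (x * (b - a)), ⟨by positivity, ?_⟩, ?_⟩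
      · rw [div_lt_one (by positivity)]
        nlinarith
      · rw [hφ]
        simp only
        have hden : b * (x - a) / (x * (b - a)) * a + (1 - b * (x - a) / (x * (b - a))) * b
            = a * b / x := by
          field_simp
          ring
        rw [hden]
        field_simp
  have hmeas : MeasurableSet (Set.Ioo (0:ℝ) 1) := measurableSet_Ioo
  -- simplification of the transported integrand
  have hcongr : Set.EqOn (fun t => |φ' t| • (f (φ t) / (φ t) ^ 2))
      (fun t => (b - a) / (a * b) * f (φ t)) (Set.Ioo 0 1) := by
    intro t ht
    have hDt := hD t ht
    simp only [smul_eq_mul]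
    rw [abs_of_pos (by rw [hφ']; positivity)]
    rw [hφ, hφ']
    simp only
    rw [div_pow]
    have hF : ∀ F : ℝ, a * b * (b - a) / (t * a + (1 - t) * b) ^ 2 *
        (F / ((a * b) ^ 2 / (t * a + (1 - t) * b) ^ 2)) = (b - a) / (a * b) * F := by
      intro F
      have hne := hDt.ne'
      generalize t * a + (1 - t) * b = D at hne ⊢
      field_simp
    exact hF _
  -- integrability of x ↦ f x / x ^ 2 on Ioo a b
  have hg_int : IntegrableOn (fun x => f x / x ^ 2) (Set.Ioo a b) := by
    have h1 : IntegrableOn f (Set.Icc a b) := by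
      rw [integrableOn_Icc_iff_integrableOn_Ioc]
      exact hint.1
    have hcont : ContinuousOn (fun x : ℝ => (x ^ 2)⁻¹) (Set.Icc a b) := by
      apply ContinuousOn.inv₀ (by fun_prop)
      intro x hx
      have : 0 < x := lt_of_lt_of_le ha0 hx.1
      positivity
    have h2 : IntegrableOn (fun x => f x * (x ^ 2)⁻¹) (Set.Icc a b) :=
      h1.mul_continuousOn hcont isCompact_Icc
    have h3 := h2.mono_set Set.Ioo_subset_Icc_self
    simpa [div_eq_mul_inv] using h3
  -- change of variables
  have key : ∫ x in Set.Ioo a b, f x / x ^ 2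
      = ∫ t in Set.Ioo (0:ℝ) 1, |φ' t| • (f (φ t) / (φ t) ^ 2) := by
    rw [← himg]
    exact MeasureTheory.integral_image_eq_integral_abs_deriv_smul hmeas hderiv hinj _
  have key2 : ∫ x in Set.Ioo a b, f x / x ^ 2
      = (b - a) / (a * b) * ∫ t in Set.Ioo (0:ℝ) 1, f (φ t) := by
    rw [key, MeasureTheory.setIntegral_congr_fun hmeas hcongr, MeasureTheory.integral_const_mul]
  -- integrability of f ∘ φ on Ioo 0 1
  have hfφ_int : IntegrableOn (fun t => f (φ t)) (Set.Ioo (0:ℝ) 1) := by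
    have h1 : IntegrableOn (fun t => |φ' t| • (f (φ t) / (φ t) ^ 2)) (Set.Ioo (0:ℝ) 1) := by
      exact (MeasureTheory.integrableOn_image_iff_integrableOn_abs_deriv_smul hmeas hderiv hinj
        (fun x => f x / x ^ 2)).1 (himg ▸ hg_int)
    have h2 : IntegrableOn (fun t => (b - a) / (a * b) * f (φ t)) (Set.Ioo (0:ℝ) 1) :=
      h1.congr_fun hcongr hmeas
    have h3 := h2.const_mul ((a * b) / (b - a))
    have he : ∀ t : ℝ, (a * b) / (b - a) * ((b - a) / (a * b) * f (φ t)) = f (φ t) := by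
      intro t
      field_simp
    simpa only [he, IntegrableOn] using h3
  -- continuity of the right-hand side integrand
  have hrc : Continuous (fun t : ℝ => t ^ s * f b + (1 - t) ^ s * f a) := by
    have h1 : Continuous (fun t : ℝ => t ^ s) := Real.continuous_rpow_const hs.1.le
    exact ((h1.mul continuous_const).add
      ((h1.comp (continuous_const.sub continuous_id)).mul continuous_const))
  have hrhs_int : IntegrableOn (fun t => t ^ s * f b + (1 - t) ^ s * f a)
      (Set.Ioo (0:ℝ) 1) := hrc.integrableOn_Icc.mono_set Set.Ioo_subset_Icc_self
  -- pointwise bound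
  have hmono : ∫ t in Set.Ioo (0:ℝ) 1, f (φ t)
      ≤ ∫ t in Set.Ioo (0:ℝ) 1, (t ^ s * f b + (1 - t) ^ s * f a) := by
    apply MeasureTheory.setIntegral_mono_on hfφ_int hrhs_int hmeas
    intro t ht
    exact hhsc a ha b hb t ⟨ht.1.le, ht.2.le⟩
  -- value of the right-hand side integral
  have hs1 : (0:ℝ) < s + 1 := by linarith [hs.1]
  have hval : ∫ t in Set.Ioo (0:ℝ) 1, (t ^ s * f b + (1 - t) ^ s * f a)
      = (f a + f b) / (s + 1) := by
    rw [← MeasureTheory.integral_Ioc_eq_integral_Ioo,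
      ← intervalIntegral.integral_of_le zero_le_one]
    have hi1 : IntervalIntegrable (fun t : ℝ => t ^ s * f b) volume 0 1 :=
      ((Real.continuous_rpow_const hs.1.le).mul continuous_const).intervalIntegrable 0 1
    have hi2 : IntervalIntegrable (fun t : ℝ => (1 - t) ^ s * f a) volume 0 1 :=
      (((Real.continuous_rpow_const hs.1.le).comp
        (continuous_const.sub continuous_id)).mul continuous_const).intervalIntegrable 0 1
    have hIs : ∫ t in (0:ℝ)..1, t ^ s = 1 / (s + 1) := by
      rw [integral_rpow (Or.inl (by linarith [hs.1] : (-1:ℝ) < s))]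
      rw [Real.one_rpow, Real.zero_rpow hs1.ne']
      ring
    have hIs' : ∫ t in (0:ℝ)..1, (1 - t) ^ s = 1 / (s + 1) := by
      have h := intervalIntegral.integral_comp_sub_left (a := (0:ℝ)) (b := (1:ℝ))
        (fun u : ℝ => u ^ s) 1
      simpa [hIs] using h
    rw [intervalIntegral.integral_add hi1 hi2, intervalIntegral.integral_mul_const,
      intervalIntegral.integral_mul_const, hIs, hIs']
    ring
  -- assemble
  rw [intervalIntegral.integral_of_le hab.le, MeasureTheory.integral_Ioc_eq_integral_Ioo, key2]
  have heq : a * b / (b - a) * ((b - a) / (a * b) * ∫ t in Set.Ioo (0:ℝ) 1, f (φ t))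
      = ∫ t in Set.Ioo (0:ℝ) 1, f (φ t) := by
    field_simp
  rw [heq, ← hval]
  exact hmono
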